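/- Let M > 1 be a real number, n ≥ 1 a natural number, and v ≥ 0 a real number with (n−1)·M·v ≤ (M−1)·n. Then there exists a unique real number α* in the half-open interval [1/M, 1) such that (M−1)·M·n·(α*)³ − (M+1)·(M−2)·n·(α*)² − (4n + (M−1)(n−1)v)·α* + 2n = 0. -/
import Mathlib


/-- The cubic `h(α)` from the two-step stochastic stepsize schedule analysis. -/
noncomputable def hcub (M n v α : ℝ) : ℝ :=
  (M - 1) * M * n * α ^ 3 - (M + 1) * (M - 2) * n * α ^ 2
    - (4 * n + (M - 1) * (n - 1) * v) * α + 2 * n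

lemma hcub_continuous (M n v : ℝ) : Continuous (hcub M n v) := by
  unfold hcub; fun_prop

lemma hcub_one (M n v : ℝ) : hcub M n v 1 = -((M - 1) * ((n - 1) * v)) := by
  unfold hcub; ring

/-- Uniqueness of roots in the interval. -/
lemma uniq_aux (M : ℝ) (n : ℕ) (v : ℝ)
    (hM : 1 < M) (hn : 1 ≤ n) (hv : 0 ≤ v) {x y : ℝ}
    (hxm : x ∈ Set.Ico (1 / M) 1) (hym : y ∈ Set.Ico (1 / M) 1)
    (hx : hcub M (n : ℝ) v x = 0) (hy : hcub M (n : ℝ) v y = 0)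
    (hlt : x < y) : False := by
  have hn1 : (1 : ℝ) ≤ (n : ℝ) := by exact_mod_cast hn
  have hM0 : (0 : ℝ) < M := lt_trans one_pos hM
  have hMi : (0 : ℝ) < 1 / M := by positivity
  have hx0 : 0 < x := lt_of_lt_of_le hMi hxm.1
  have hy0 : 0 < y := lt_of_lt_of_le hMi hym.1
  have hx1 : x < 1 := hxm.2
  have hy1 : y < 1 := hym.2
  have key : (x - y) * (x * y * (hcub M (n : ℝ) v 1)
      - (1 - x) * (1 - y) * ((M - 1) * M * n * (x * y) + 2 * n)) = 0 := by
    simp only [hcub] at hx hy ⊢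
    linear_combination (y * (1 - y)) * hx - (x * (1 - x)) * hy
  have hxy : x - y ≠ 0 := by linarith
  have key2 : x * y * (hcub M (n : ℝ) v 1)
      = (1 - x) * (1 - y) * ((M - 1) * M * n * (x * y) + 2 * n) := by
    rcases mul_eq_zero.1 key with h | h
    · exact absurd h hxy
    · linarith
  have h1le : hcub M (n : ℝ) v 1 ≤ 0 := by
    rw [hcub_one]
    have : 0 ≤ (M - 1) * (((n : ℝ) - 1) * v) :=
      mul_nonneg (by linarith) (mul_nonneg (by linarith) hv)
    linarith
  have hpos : 0 < (1 - x) * (1 - y) * ((M - 1) * M * n * (x * y) + 2 * n) := by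
    have hnp : (0:ℝ) < n := lt_of_lt_of_le one_pos hn1
    have h1 : 0 < (M - 1) * M * n * (x * y) :=
      mul_pos (mul_pos (mul_pos (by linarith) hM0) hnp) (mul_pos hx0 hy0)
    have h2 : 0 < (M - 1) * M * n * (x * y) + 2 * n := by linarith
    exact mul_pos (mul_pos (by linarith) (by linarith)) h2
  nlinarith [mul_pos hx0 hy0]

theorem stmt_0 (M : ℝ) (n : ℕ) (v : ℝ)
    (hM : 1 < M) (hn : 1 ≤ n) (hv : 0 ≤ v)
    (hbound : ((n : ℝ) - 1) * M * v ≤ (M - 1) * n) :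
    ∃! α : ℝ, α ∈ Set.Ico (1 / M) 1 ∧ hcub M (n : ℝ) v α = 0 := by
  have hn1 : (1 : ℝ) ≤ (n : ℝ) := by exact_mod_cast hn
  have hM0 : (0 : ℝ) < M := lt_trans one_pos hM
  have hMne : M ≠ 0 := ne_of_gt hM0
  have hMi1 : 1 / M < 1 := by
    rw [div_lt_one hM0]; exact hM
  -- value at 1/M
  have hvalA : hcub M (n : ℝ) v (1 / M) * M ^ 2
      = (M - 1) * ((M - 1) * n - ((n : ℝ) - 1) * M * v) := by
    unfold hcub; field_simp; ring
  have hA : 0 ≤ hcub M (n : ℝ) v (1 / M) := by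
    have hr : 0 ≤ (M - 1) * ((M - 1) * n - ((n : ℝ) - 1) * M * v) := by
      have : 0 ≤ (M - 1) * n - ((n : ℝ) - 1) * M * v := by linarith
      exact mul_nonneg (by linarith) this
    have hsq : (0:ℝ) < M ^ 2 := by positivity
    nlinarith [hvalA, hr]
  have h1le : hcub M (n : ℝ) v 1 ≤ 0 := by
    rw [hcub_one]
    have : 0 ≤ (M - 1) * (((n : ℝ) - 1) * v) :=
      mul_nonneg (by linarith) (mul_nonneg (by linarith) hv)
    linarith
  -- existence of a root
  have hex : ∃ α ∈ Set.Ico (1 / M) 1, hcub M (n : ℝ) v α = 0 := by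
    rcases eq_or_lt_of_le hA with h0 | hApos
    · exact ⟨1 / M, ⟨le_refl _, hMi1⟩, h0.symm⟩
    rcases eq_or_lt_of_le h1le with h10 | h1neg
    · -- h(1) = 0, so (n-1)*v = 0 and h factors
      have hnv : ((n : ℝ) - 1) * v = 0 := by
        rw [hcub_one] at h10
        have hz : (M - 1) * (((n : ℝ) - 1) * v) = 0 := by linarith
        rcases mul_eq_zero.1 hz with h | h
        · linarith
        · exact h
      set g : ℝ → ℝ := fun α => M * (M - 1) * α ^ 2 + 2 * α - 2 with hg
      have hgc : ContinuousOn g (Set.Icc (1 / M) 1) := by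
        apply Continuous.continuousOn; fun_prop
      have hga : g (1 / M) < 0 := by
        have : g (1 / M) * M = 1 - M := by
          simp only [hg]; field_simp; ring
        nlinarith
      have hgb : 0 < g 1 := by
        simp only [hg]; nlinarith
      have : (0:ℝ) ∈ Set.Ioo (g (1 / M)) (g 1) := ⟨hga, hgb⟩
      obtain ⟨β, hβm, hβ⟩ := intermediate_value_Ioo hMi1.le hgc this
      refine ⟨β, ⟨hβm.1.le, hβm.2⟩, ?_⟩
      simp only [hg] at hβ
      unfold hcub
      linear_combination ((n : ℝ)) * (β - 1) * hβ - (M - 1) * β * hnv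
    · -- h(1) < 0, plain IVT
      have hc : ContinuousOn (hcub M (n : ℝ) v) (Set.Icc (1 / M) 1) :=
        (hcub_continuous M (n : ℝ) v).continuousOn
      have : (0:ℝ) ∈ Set.Ioo (hcub M (n : ℝ) v 1) (hcub M (n : ℝ) v (1 / M)) :=
        ⟨h1neg, hApos⟩
      obtain ⟨β, hβm, hβ⟩ := intermediate_value_Ioo' hMi1.le hc this
      exact ⟨β, ⟨hβm.1.le, hβm.2⟩, hβ⟩
  obtain ⟨α, hαm, hα⟩ := hex
  refine ⟨α, ⟨hαm, hα⟩, ?_⟩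
  rintro y ⟨hym, hy⟩
  rcases lt_trichotomy y α with h | h | h
  · exact absurd (uniq_aux M n v hM hn hv hym hαm hy hα h) (fun f => f.elim)
  · exact h
  · exact absurd (uniq_aux M n v hM hn hv hαm hym hα hy h) (fun f => f.elim)
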